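/- For 0 < α < 1 and any angle φ₀ with -π/2 ≤ φ₀ ≤ π/2, the integral of (e^{-z} - 1) z^{-(1+α)} along the ray {r e^{iφ₀} : 0 < r < ∞} equals Γ(-α). -/

import Mathlib

open Real MeasureTheory

namespace RayAux

open Set Filter Topology


lemma min_mul_le (a b : ℝ) (ha : 0 ≤ a) (hb : 0 ≤ b) :
    min (a * b) 1 ≤ max b 1 * min a 1 := by
  rcases le_total a 1 with h1 | h1
  · rw [min_eq_left h1]
    calc min (a * b) 1 ≤ a * b := min_le_left _ _
    _ ≤ a * max b 1 := by gcongr; exact le_max_left _ _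
    _ = max b 1 * a := mul_comm _ _
  · rw [min_eq_right h1]
    calc min (a * b) 1 ≤ 1 := min_le_right _ _
    _ ≤ max b 1 * 1 := by nlinarith [le_max_right b 1]

lemma norm_cpow_eq (α r : ℝ) (hr : 0 < r) :
    ‖(r:ℂ) ^ (-(1+(α:ℂ)))‖ = r ^ (-(1+α)) := by
  rw [Complex.norm_cpow_eq_rpow_re_of_pos hr]
  norm_num

lemma exp_term_bound {c : ℂ} (hc : 0 ≤ c.re) {r : ℝ} (hr : 0 ≤ r) :
    ‖Complex.exp (-(r * c)) - 1‖ ≤ 2 * min (r * ‖c‖) 1 := by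
  have habs : ‖(-(↑r * c))‖ = r * ‖c‖ := by
    simp [abs_of_nonneg hr]
  rcases le_total (r * ‖c‖) 1 with h | h
  · rw [min_eq_left h]
    have := Complex.norm_exp_sub_one_le (x := -(↑r * c)) (by rw [habs]; exact h)
    rwa [habs] at this
  · rw [min_eq_right h]
    have h1 : ‖Complex.exp (-(↑r * c))‖ ≤ 1 := by
      rw [Complex.norm_exp]
      apply Real.exp_le_one_iff.mpr
      simp only [Complex.neg_re, Complex.mul_re, Complex.ofReal_re, Complex.ofReal_im,
        zero_mul, sub_zero]
      nlinarith
    calc ‖Complex.exp (-(↑r * c)) - 1‖ ≤ ‖Complex.exp (-(↑r * c))‖ + ‖(1:ℂ)‖ := norm_sub_le _ _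
    _ ≤ 1 + 1 := by rw [norm_one]; linarith
    _ = 2 * 1 := by ring

/-- integrability of the dominating function -/
lemma integrable_dom {α : ℝ} (hα : 0 < α) (hα1 : α < 1) :
    IntegrableOn (fun r : ℝ => min r 1 * r ^ (-(1+α))) (Ioi 0) := by
  have h1 : IntegrableOn (fun r : ℝ => min r 1 * r ^ (-(1+α))) (Ioc 0 1) := by
    have hint : IntegrableOn (fun r : ℝ => r ^ (-α)) (Ioc 0 1) := by
      have := intervalIntegral.intervalIntegrable_rpow' (a := 0) (b := 1) (r := -α)
        (by linarith)
      rwa [intervalIntegrable_iff_integrableOn_Ioc_of_le zero_le_one] at this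
    apply hint.congr_fun ?_ measurableSet_Ioc
    intro r hr
    dsimp only
    rw [min_eq_left hr.2, ← Real.rpow_one_add' (le_of_lt hr.1) (by norm_num [hα.ne'])]
    norm_num
  have h2 : IntegrableOn (fun r : ℝ => min r 1 * r ^ (-(1+α))) (Ioi 1) := by
    have hint : IntegrableOn (fun r : ℝ => r ^ (-(1+α))) (Ioi 1) :=
      integrableOn_Ioi_rpow_of_lt (by linarith) one_pos
    apply hint.congr_fun ?_ measurableSet_Ioi
    intro r hr
    dsimp only
    rw [min_eq_right (le_of_lt hr)] ; ring
  have := h1.union h2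
  rwa [Ioc_union_Ioi_eq_Ioi zero_le_one] at this


lemma real_base {α : ℝ} (hα : 0 < α) (hα1 : α < 1) :
    ∫ r in Ioi (0:ℝ), (Real.exp (-r) - 1) * r ^ (-(1+α)) = Real.Gamma (-α) := by
  set f : ℝ → ℝ := fun r => (Real.exp (-r) - 1) * r ^ (-α) / (-α) with hf
  set A : ℝ → ℝ := fun r => Real.exp (-r) * r ^ (-α) / α with hA
  set f' : ℝ → ℝ := fun r => Real.exp (-r) * r ^ (-α) / α + (Real.exp (-r) - 1) * r ^ (-(1+α))
    with hf'
  have hexp : ∀ r : ℝ, HasDerivAt (fun r : ℝ => Real.exp (-r) - 1) (-Real.exp (-r)) r := by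
    intro r
    have h := ((hasDerivAt_id r).neg.exp).sub_const 1
    simpa using h
  have hderiv : ∀ r ∈ Ioi (0:ℝ), HasDerivAt f (f' r) r := by
    intro r hr
    have hrpow : HasDerivAt (fun r : ℝ => r ^ (-α)) (-α * r ^ (-α - 1)) r :=
      Real.hasDerivAt_rpow_const (Or.inl (ne_of_gt hr))
    have h := ((hexp r).mul hrpow).div_const (-α)
    refine h.congr_deriv ?_
    rw [show -α - 1 = -(1+α) from by ring, hf']
    dsimp only
    set X := r ^ (-α)
    set Y := r ^ (-(1+α))
    field_simp [hα.ne']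
    ring
  have hbound : ∀ r : ℝ, 0 ≤ r → |Real.exp (-r) - 1| ≤ min r 1 := by
    intro r hr
    have h1 : Real.exp (-r) ≤ 1 := Real.exp_le_one_iff.mpr (by linarith)
    have h2 : 1 - r ≤ Real.exp (-r) := by
      have := Real.add_one_le_exp (-r); linarith
    have h3 : 0 < Real.exp (-r) := Real.exp_pos _
    rw [abs_le]
    constructor
    · rcases le_total r 1 with h | h
      · rw [min_eq_left h]; linarith
      · rw [min_eq_right h]; linarith
    · have : 0 ≤ min r 1 := le_min hr zero_le_one
      linarith
  have hcont : ContinuousWithinAt f (Ici 0) 0 := by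
    have hf0 : f 0 = 0 := by
      simp [hf, Real.zero_rpow (neg_ne_zero.mpr hα.ne')]
    rw [ContinuousWithinAt, hf0]
    apply squeeze_zero_norm' (a := fun r => r ^ (1 - α) / α)
    · filter_upwards [self_mem_nhdsWithin] with r (hr : r ∈ Ici 0)
      rcases eq_or_lt_of_le (α := ℝ) (b := r) hr with h | h
      · simp [hf, ← h, Real.zero_rpow (neg_ne_zero.mpr hα.ne'),
          Real.zero_rpow (show 1 - α ≠ 0 by intro hh; linarith)]
      · have h1 : |Real.exp (-r) - 1| ≤ r := (hbound r hr).trans (min_le_left _ _)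
        have h2 : (0:ℝ) ≤ r ^ (-α) := Real.rpow_nonneg hr _
        have h3 : r ^ (1 - α) = r * r ^ (-α) := by
          rw [show (1:ℝ) - α = 1 + -α by ring, Real.rpow_one_add' hr (by intro hh; linarith)]
        rw [hf]
        dsimp only
        rw [Real.norm_eq_abs, abs_div, abs_neg, abs_of_pos hα, div_le_div_iff_of_pos_right hα, abs_mul,
          abs_of_nonneg h2, h3]
        exact mul_le_mul_of_nonneg_right h1 h2
    · have : ContinuousWithinAt (fun r : ℝ => r ^ (1 - α) / α) (Ici 0) 0 :=
        ((Real.continuousAt_rpow_const 0 (1 - α) (Or.inr (by linarith))).continuousWithinAt).div_const α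
      have h0 : (0:ℝ) ^ (1 - α) / α = 0 := by
        rw [Real.zero_rpow (show 1 - α ≠ 0 by intro hh; linarith), zero_div]
      rw [ContinuousWithinAt, h0] at this
      exact this
  have htop : Tendsto f atTop (𝓝 0) := by
    have h1 : Tendsto (fun r : ℝ => Real.exp (-r)) atTop (𝓝 0) :=
      Real.tendsto_exp_neg_atTop_nhds_zero
    have h2 : Tendsto (fun r : ℝ => r ^ (-α)) atTop (𝓝 0) :=
      tendsto_rpow_neg_atTop hα
    have := ((h1.sub_const 1).mul h2).div_const (-α)
    simpa using this
  have hGint := Real.GammaIntegral_convergent (show (0:ℝ) < 1 - α by linarith)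
  have hGint' : IntegrableOn (fun r : ℝ => Real.exp (-r) * r ^ (-α)) (Ioi 0) := by
    apply hGint.congr_fun ?_ measurableSet_Ioi
    intro r _
    rw [show (1:ℝ) - α - 1 = -α by ring]
  have hintA : IntegrableOn A (Ioi 0) := hGint'.div_const α
  have hint2 : IntegrableOn (fun r : ℝ => (Real.exp (-r) - 1) * r ^ (-(1+α))) (Ioi 0) := by
    have hdom : IntegrableOn (fun r : ℝ => min r 1 * r ^ (-(1+α))) (Ioi 0) :=
      integrable_dom hα hα1
    apply Integrable.mono' hdom ?_
    · filter_upwards [ae_restrict_mem measurableSet_Ioi] with r hr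
      rw [Real.norm_eq_abs, abs_mul, abs_of_nonneg (Real.rpow_nonneg (le_of_lt hr) _)]
      exact mul_le_mul_of_nonneg_right (hbound r (le_of_lt hr))
        (Real.rpow_nonneg (le_of_lt hr) _)
    · apply ContinuousOn.aestronglyMeasurable ?_ measurableSet_Ioi
      intro r hr
      exact (((Real.continuous_exp.comp continuous_neg).sub continuous_const).continuousWithinAt).mul
        ((Real.continuousAt_rpow_const r _ (Or.inl (ne_of_gt hr))).continuousWithinAt)
  have hintf' : IntegrableOn f' (Ioi 0) := hintA.add hint2
  have hFTC := integral_Ioi_of_hasDerivAt_of_tendsto hcont hderiv hintf' htop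
  have hf0 : f 0 = 0 := by
    simp [hf, Real.zero_rpow (neg_ne_zero.mpr hα.ne')]
  rw [hf0, sub_zero] at hFTC
  have hsplit : ∫ r in Ioi (0:ℝ), (Real.exp (-r) - 1) * r ^ (-(1+α))
      = (∫ r in Ioi (0:ℝ), f' r) - ∫ r in Ioi (0:ℝ), A r := by
    rw [← integral_sub hintf' hintA]
    apply setIntegral_congr_fun measurableSet_Ioi
    intro r _
    simp only [hf', hA]
    ring
  have hGammaA : ∫ r in Ioi (0:ℝ), A r = Real.Gamma (1 - α) / α := by
    rw [Real.Gamma_eq_integral (show (0:ℝ) < 1 - α by linarith)]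
    rw [hA, ← integral_div]
    apply setIntegral_congr_fun measurableSet_Ioi
    intro r _
    rw [show (1:ℝ) - α - 1 = -α by ring]
  have hGneg : Real.Gamma (-α) = -(Real.Gamma (1 - α) / α) := by
    have := Real.Gamma_add_one (neg_ne_zero.mpr hα.ne')
    rw [show -α + 1 = 1 - α by ring] at this
    field_simp [hα.ne'] at this ⊢
    linarith
  rw [hsplit, hFTC, hGammaA, hGneg, zero_sub]


noncomputable def rayH (α : ℝ) (c : ℂ) : ℂ :=
  ∫ r in Ioi (0:ℝ), (Complex.exp (-(↑r * c)) - 1) * (r:ℂ) ^ (-(1+(α:ℂ)))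

lemma integrand_contOn (α : ℝ) (c : ℂ) :
    ContinuousOn (fun r : ℝ => (Complex.exp (-(↑r * c)) - 1) * (r:ℂ) ^ (-(1+(α:ℂ)))) (Ioi 0) := by
  intro r hr
  refine ContinuousWithinAt.mul ?_ ?_
  · exact ((Complex.continuous_exp.comp
      ((Complex.continuous_ofReal.mul continuous_const).neg)).sub continuous_const).continuousWithinAt
  · exact (Complex.continuousAt_ofReal_cpow_const r _ (Or.inr (ne_of_gt hr))).continuousWithinAt

lemma integrand_norm_le {α : ℝ} {c : ℂ} (hc : 0 ≤ c.re) {r : ℝ} (hr : r ∈ Ioi (0:ℝ)) :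
    ‖(Complex.exp (-(↑r * c)) - 1) * (r:ℂ) ^ (-(1+(α:ℂ)))‖
      ≤ (2 * max ‖c‖ 1) * (min r 1 * r ^ (-(1+α))) := by
  rw [norm_mul, norm_cpow_eq α r hr]
  have h1 := exp_term_bound hc (le_of_lt (Set.mem_Ioi.mp hr))
  have h2 := min_mul_le r ‖c‖ (le_of_lt (Set.mem_Ioi.mp hr)) (norm_nonneg c)
  have h3 : (0:ℝ) ≤ r ^ (-(1+α)) := Real.rpow_nonneg (le_of_lt (Set.mem_Ioi.mp hr)) _
  have h4 : ‖Complex.exp (-(↑r * c)) - 1‖ ≤ 2 * (max ‖c‖ 1 * min r 1) :=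
    h1.trans (by nlinarith)
  calc ‖Complex.exp (-(↑r * c)) - 1‖ * r ^ (-(1+α))
      ≤ (2 * (max ‖c‖ 1 * min r 1)) * r ^ (-(1+α)) := mul_le_mul_of_nonneg_right h4 h3
  _ = (2 * max ‖c‖ 1) * (min r 1 * r ^ (-(1+α))) := by ring

lemma integrable_integrand {α : ℝ} (hα : 0 < α) (hα1 : α < 1) {c : ℂ} (hc : 0 ≤ c.re) :
    IntegrableOn (fun r : ℝ => (Complex.exp (-(↑r * c)) - 1) * (r:ℂ) ^ (-(1+(α:ℂ)))) (Ioi 0) := by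
  apply Integrable.mono' ((integrable_dom hα hα1).const_mul (2 * max ‖c‖ 1))
    ((integrand_contOn α c).aestronglyMeasurable measurableSet_Ioi)
  filter_upwards [ae_restrict_mem measurableSet_Ioi] with r hr
  exact integrand_norm_le hc hr

lemma rayH_one {α : ℝ} (hα : 0 < α) (hα1 : α < 1) :
    rayH α 1 = Complex.Gamma (-(α:ℂ)) := by
  have h1 : rayH α 1
      = ∫ r in Ioi (0:ℝ), (((Real.exp (-r) - 1) * r ^ (-(1+α)) : ℝ) : ℂ) := by
    rw [rayH]
    apply setIntegral_congr_fun measurableSet_Ioi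
    intro r hr
    dsimp only
    rw [mul_one]
    push_cast [Complex.ofReal_cpow (le_of_lt hr)]
    ring
  have h2 : Complex.Gamma (-(α:ℂ)) = (((Real.Gamma (-α)) : ℝ) : ℂ) := by
    rw [show -(α:ℂ) = ((-α : ℝ) : ℂ) by push_cast; ring, Complex.Gamma_ofReal]
  rw [h1, h2, ← real_base hα hα1]
  exact integral_ofReal

lemma rayH_real {α : ℝ} (hα : 0 < α) (hα1 : α < 1) {b : ℝ} (hb : 0 < b) :
    rayH α ↑b = (b:ℂ) ^ (α:ℂ) * Complex.Gamma (-(α:ℂ)) := by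
  have hb0 : (b:ℂ) ≠ 0 := Complex.ofReal_ne_zero.mpr hb.ne'
  have key := integral_comp_mul_left_Ioi
    (fun u : ℝ => (Complex.exp (-(u:ℂ)) - 1) * ((u:ℝ):ℂ) ^ (-(1+(α:ℂ)))) 0 hb
  rw [mul_zero] at key
  have lhs_eq : ∫ x in Ioi (0:ℝ),
      (fun u : ℝ => (Complex.exp (-(u:ℂ)) - 1) * ((u:ℝ):ℂ) ^ (-(1+(α:ℂ)))) (b * x)
      = (∫ x in Ioi (0:ℝ), (Complex.exp (-(↑x * ↑b)) - 1) * ((x:ℝ):ℂ) ^ (-(1+(α:ℂ))))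
          * (b:ℂ) ^ (-(1+(α:ℂ))) := by
    rw [← integral_mul_const]
    apply setIntegral_congr_fun measurableSet_Ioi
    intro x hx
    dsimp only
    rw [Complex.ofReal_mul, Complex.mul_cpow_ofReal_nonneg hb.le (le_of_lt hx)]
    ring_nf
  have rhs_eq : (fun u : ℝ => (Complex.exp (-(u:ℂ)) - 1) * ((u:ℝ):ℂ) ^ (-(1+(α:ℂ))))
      = fun u : ℝ => (Complex.exp (-(↑u * (1:ℂ))) - 1) * ((u:ℝ):ℂ) ^ (-(1+(α:ℂ))) := by
    funext u; rw [mul_one]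
  rw [lhs_eq, rhs_eq] at key
  have key2 : rayH α ↑b * (b:ℂ) ^ (-(1+(α:ℂ))) = (b⁻¹ : ℝ) • rayH α 1 := key
  have hsmul : (b⁻¹ : ℝ) • rayH α 1 = ((b:ℂ))⁻¹ * rayH α 1 := by
    rw [Complex.real_smul]; push_cast; ring
  have hcpow : (b:ℂ) ^ (-(1+(α:ℂ))) ≠ 0 := by
    rw [Complex.cpow_def_of_ne_zero hb0]
    exact Complex.exp_ne_zero _
  rw [hsmul] at key2
  have h5 : rayH α ↑b = ((b:ℂ))⁻¹ * ((b:ℂ) ^ (-(1+(α:ℂ))))⁻¹ * rayH α 1 := by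
    calc rayH α ↑b
        = rayH α ↑b * ((b:ℂ) ^ (-(1+(α:ℂ))) * ((b:ℂ) ^ (-(1+(α:ℂ))))⁻¹) := by
          rw [mul_inv_cancel₀ hcpow, mul_one]
    _ = (rayH α ↑b * (b:ℂ) ^ (-(1+(α:ℂ)))) * ((b:ℂ) ^ (-(1+(α:ℂ))))⁻¹ := by ring
    _ = ((b:ℂ))⁻¹ * rayH α 1 * ((b:ℂ) ^ (-(1+(α:ℂ))))⁻¹ := by rw [key2]
    _ = ((b:ℂ))⁻¹ * ((b:ℂ) ^ (-(1+(α:ℂ))))⁻¹ * rayH α 1 := by ring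
  rw [h5, rayH_one hα hα1]
  have h6 : ((b:ℂ))⁻¹ * ((b:ℂ) ^ (-(1+(α:ℂ))))⁻¹ = (b:ℂ) ^ (α:ℂ) := by
    rw [← Complex.cpow_neg, neg_neg, show (1:ℂ) + α = α + 1 by ring,
      Complex.cpow_add _ _ hb0, Complex.cpow_one]
    field_simp
    try ring
  rw [h6]


lemma integrable_bound {α : ℝ} (hα : 0 < α) (hα1 : α < 1) {δ : ℝ} (hδ : 0 < δ) :
    IntegrableOn (fun r : ℝ => r ^ (-α) * Real.exp (-δ * r)) (Ioi 0) := by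
  have hc : ContinuousOn (fun r : ℝ => r ^ (-α) * Real.exp (-δ * r)) (Ioi 0) := by
    intro r hr
    exact ((Real.continuousAt_rpow_const r _ (Or.inl (ne_of_gt hr))).continuousWithinAt).mul
      ((Real.continuous_exp.comp (continuous_const.mul continuous_id)).continuousWithinAt)
  have h1 : IntegrableOn (fun r : ℝ => r ^ (-α) * Real.exp (-δ * r)) (Ioc 0 1) := by
    have hint : IntegrableOn (fun r : ℝ => r ^ (-α)) (Ioc 0 1) := by
      have := intervalIntegral.intervalIntegrable_rpow' (a := 0) (b := 1) (r := -α)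
        (by linarith)
      rwa [intervalIntegrable_iff_integrableOn_Ioc_of_le zero_le_one] at this
    apply Integrable.mono' hint
      ((hc.mono Ioc_subset_Ioi_self).aestronglyMeasurable measurableSet_Ioc)
    filter_upwards [ae_restrict_mem measurableSet_Ioc] with r hr
    have he : Real.exp (-δ * r) ≤ 1 := Real.exp_le_one_iff.mpr (by nlinarith [hr.1])
    have hp : (0:ℝ) ≤ r ^ (-α) := Real.rpow_nonneg hr.1.le _
    rw [Real.norm_eq_abs, abs_mul, abs_of_nonneg hp, abs_of_pos (Real.exp_pos _)]
    nlinarith [Real.exp_pos (-δ * r)]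
  have h2 : IntegrableOn (fun r : ℝ => r ^ (-α) * Real.exp (-δ * r)) (Ioi 1) := by
    apply Integrable.mono' (exp_neg_integrableOn_Ioi 1 hδ)
      ((hc.mono (Ioi_subset_Ioi zero_le_one)).aestronglyMeasurable measurableSet_Ioi)
    filter_upwards [ae_restrict_mem measurableSet_Ioi] with r hr
    have hr1 : (1:ℝ) ≤ r := le_of_lt hr
    have hp : r ^ (-α) ≤ 1 :=
      Real.rpow_le_one_of_one_le_of_nonpos hr1 (by linarith)
    have hp0 : (0:ℝ) ≤ r ^ (-α) := Real.rpow_nonneg (by linarith) _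
    rw [Real.norm_eq_abs, abs_mul, abs_of_nonneg hp0, abs_of_pos (Real.exp_pos _)]
    nlinarith [Real.exp_pos (-δ * r)]
  have := h1.union h2
  rwa [Ioc_union_Ioi_eq_Ioi zero_le_one] at this

lemma rayH_differentiableAt {α : ℝ} (hα : 0 < α) (hα1 : α < 1) {c : ℂ} (hc : 0 < c.re) :
    DifferentiableAt ℂ (rayH α) c := by
  set F : ℂ → ℝ → ℂ := fun x r => (Complex.exp (-(↑r * x)) - 1) * (r:ℂ) ^ (-(1+(α:ℂ))) with hF
  set F' : ℂ → ℝ → ℂ := fun x r => Complex.exp (-(↑r * x)) * -↑r * (r:ℂ) ^ (-(1+(α:ℂ))) with hF'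
  have hre : ∀ x ∈ Metric.ball c (c.re/2), c.re/2 ≤ x.re := by
    intro x hx
    rw [Metric.mem_ball, Complex.dist_eq] at hx
    have h1 : |(x - c).re| ≤ ‖x - c‖ := Complex.abs_re_le_norm _
    have h2 := abs_le.mp (h1.trans hx.le)
    simp only [Complex.sub_re] at h2
    linarith [h2.1]
  have key := hasDerivAt_integral_of_dominated_loc_of_deriv_le (F := F) (F' := F')
    (x₀ := c) (bound := fun r => r ^ (-α) * Real.exp (-(c.re/2) * r))
    (μ := volume.restrict (Ioi (0:ℝ))) (Metric.ball_mem_nhds c (half_pos hc))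
    (Eventually.of_forall fun x => (integrand_contOn α x).aestronglyMeasurable measurableSet_Ioi)
    (integrable_integrand hα hα1 hc.le)
    ?_ ?_ (integrable_bound hα hα1 (half_pos hc)) ?_
  · exact key.2.differentiableAt
  · -- measurability of F' c
    apply ContinuousOn.aestronglyMeasurable ?_ measurableSet_Ioi
    intro r hr
    refine ContinuousWithinAt.mul (ContinuousWithinAt.mul ?_ ?_) ?_
    · exact ((Complex.continuous_exp.comp
        ((Complex.continuous_ofReal.mul continuous_const).neg)).continuousWithinAt)
    · exact (Complex.continuous_ofReal.neg).continuousWithinAt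
    · exact (Complex.continuousAt_ofReal_cpow_const r _ (Or.inr (ne_of_gt hr))).continuousWithinAt
  · -- bound
    filter_upwards [ae_restrict_mem measurableSet_Ioi] with r hr
    intro x hx
    have hr0 : (0:ℝ) < r := hr
    have hxre := hre x hx
    have h1 : ‖F' x r‖ = Real.exp (-(r * x.re)) * (r * r ^ (-(1+α))) := by
      rw [hF']
      dsimp only
      rw [norm_mul, norm_mul, Complex.norm_exp]
      have : (-(↑r * x)).re = -(r * x.re) := by
        simp [Complex.mul_re]
      rw [this, norm_neg, Complex.norm_real, Real.norm_eq_abs, abs_of_pos hr0,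
        Complex.norm_cpow_eq_rpow_re_of_pos hr0]
      norm_num
      ring
    rw [h1]
    have h2 : r * r ^ (-(1+α)) = r ^ (-α) := by
      rw [show -α = 1 + -(1+α) by ring, Real.rpow_one_add' hr0.le (by norm_num [hα.ne'])]
    rw [h2]
    have h3 : Real.exp (-(r * x.re)) ≤ Real.exp (-(c.re/2) * r) := by
      apply Real.exp_le_exp.mpr
      nlinarith
    have h4 : (0:ℝ) ≤ r ^ (-α) := Real.rpow_nonneg hr0.le _
    calc Real.exp (-(r * x.re)) * r ^ (-α) ≤ Real.exp (-(c.re/2) * r) * r ^ (-α) :=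
      mul_le_mul_of_nonneg_right h3 h4
    _ = r ^ (-α) * Real.exp (-(c.re/2) * r) := by ring
  · -- differentiability
    filter_upwards [ae_restrict_mem measurableSet_Ioi] with r hr
    intro x hx
    have h1 : HasDerivAt (fun x : ℂ => -(↑r * x)) (-↑r) x := by
      simpa only [neg_mul, mul_one] using ((hasDerivAt_id' x).const_mul (-(r:ℂ)))
    exact ((h1.cexp).sub_const 1).mul_const _

lemma rayH_eq_on_halfplane {α : ℝ} (hα : 0 < α) (hα1 : α < 1) {c : ℂ} (hc : 0 < c.re) :
    rayH α c = c ^ (α:ℂ) * Complex.Gamma (-(α:ℂ)) := by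
  have hU : IsOpen {z : ℂ | 0 < z.re} := isOpen_lt continuous_const Complex.continuous_re
  have hUc : IsPreconnected {z : ℂ | 0 < z.re} := (convex_halfSpace_re_gt 0).isPreconnected
  have hdo : DifferentiableOn ℂ (rayH α) {z : ℂ | 0 < z.re} :=
    fun z hz => (rayH_differentiableAt hα hα1 hz).differentiableWithinAt
  have h1 : AnalyticOnNhd ℂ (rayH α) {z : ℂ | 0 < z.re} := hdo.analyticOnNhd hU
  have h2 : AnalyticOnNhd ℂ (fun z : ℂ => z ^ (α:ℂ) * Complex.Gamma (-(α:ℂ)))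
      {z : ℂ | 0 < z.re} := by
    apply DifferentiableOn.analyticOnNhd ?_ hU
    intro z hz
    apply DifferentiableAt.differentiableWithinAt
    apply DifferentiableAt.mul_const
    exact differentiableAt_id.cpow (differentiableAt_const _)
      (Complex.mem_slitPlane_iff.mpr (Or.inl hz))
  have h3 : (1:ℂ) ∈ {z : ℂ | 0 < z.re} := by norm_num
  have hfreq : ∃ᶠ z in 𝓝[≠] (1:ℂ), rayH α z = z ^ (α:ℂ) * Complex.Gamma (-(α:ℂ)) := by
    have hseq : Tendsto (fun n : ℕ => ((1 + 1/(n+1) : ℝ) : ℂ)) atTop (𝓝[≠] (1:ℂ)) := by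
      apply tendsto_nhdsWithin_of_tendsto_nhds_of_eventually_within
      · have ht : Tendsto (fun n : ℕ => (1 + 1/(n+1) : ℝ)) atTop (𝓝 1) := by
          have h0 := tendsto_one_div_add_atTop_nhds_zero_nat (𝕜 := ℝ)
          have h1 := h0.const_add (1:ℝ)
          simpa using h1
        have h2 := (Complex.continuous_ofReal.tendsto 1).comp ht
        rw [show ((1:ℝ):ℂ) = (1:ℂ) by norm_num] at h2
        exact h2.congr (fun n => rfl)
      · apply Eventually.of_forall
        intro n
        simp only [mem_compl_iff, mem_singleton_iff]
        intro h
        rw [Complex.ofReal_eq_one] at h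
        have hpos : (0:ℝ) < 1/(n+1) := by positivity
        linarith
    apply hseq.frequently
    apply Frequently.of_forall
    intro n
    exact rayH_real hα hα1 (by positivity)
  exact h1.eqOn_of_preconnected_of_frequently_eq h2 hUc h3 hfreq hc


lemma exp_I_re (φ : ℝ) : (Complex.exp (Complex.I * φ)).re = Real.cos φ := by
  rw [show Complex.I * (φ:ℂ) = (φ:ℂ) * Complex.I by ring, Complex.exp_ofReal_mul_I_re]

lemma norm_exp_I (φ : ℝ) : ‖Complex.exp (Complex.I * φ)‖ = 1 := by
  rw [Complex.norm_exp]
  have : (Complex.I * (φ:ℂ)).re = 0 := by simp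
  rw [this, Real.exp_zero]

lemma rayH_ray_interior {α : ℝ} (hα : 0 < α) (hα1 : α < 1) {φ : ℝ} (hφ : |φ| < π/2) :
    rayH α (Complex.exp (Complex.I * φ))
      = Complex.exp ((α:ℂ) * (Complex.I * φ)) * Complex.Gamma (-(α:ℂ)) := by
  obtain ⟨hφ1, hφ2⟩ := abs_lt.mp hφ
  have hre : 0 < (Complex.exp (Complex.I * φ)).re := by
    rw [exp_I_re]
    exact Real.cos_pos_of_mem_Ioo ⟨by linarith, hφ2⟩
  rw [rayH_eq_on_halfplane hα hα1 hre]
  congr 1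
  have him1 : -π < (Complex.I * (φ:ℂ)).im := by
    simp only [Complex.mul_im, Complex.I_re, Complex.I_im, Complex.ofReal_re,
      Complex.ofReal_im, zero_mul, one_mul, zero_add]
    nlinarith [Real.pi_pos]
  have him2 : (Complex.I * (φ:ℂ)).im ≤ π := by
    simp only [Complex.mul_im, Complex.I_re, Complex.I_im, Complex.ofReal_re,
      Complex.ofReal_im, zero_mul, one_mul, zero_add]
    nlinarith [Real.pi_pos]
  rw [Complex.cpow_def_of_ne_zero (Complex.exp_ne_zero _), Complex.log_exp him1 him2]
  congr 1
  ring

lemma rayH_ray {α : ℝ} (hα : 0 < α) (hα1 : α < 1) {φ : ℝ} (hφ : -(π/2) ≤ φ) (hφ' : φ ≤ π/2) :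
    rayH α (Complex.exp (Complex.I * φ))
      = Complex.exp ((α:ℂ) * (Complex.I * φ)) * Complex.Gamma (-(α:ℂ)) := by
  set φn : ℕ → ℝ := fun n => φ * (n / (n+1)) with hφn
  have hlt : ∀ n : ℕ, |φn n| < π/2 := by
    intro n
    have h1 : (0:ℝ) ≤ (n:ℝ) / (n+1) := by positivity
    have h2 : (n:ℝ) / (n+1) < 1 := by
      rw [div_lt_one (by positivity)]; linarith
    have h3 : |φ| ≤ π/2 := abs_le.mpr ⟨by linarith, hφ'⟩
    rw [hφn]
    dsimp only
    rw [abs_mul, abs_of_nonneg h1]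
    have hpi := Real.pi_pos
    rcases eq_or_lt_of_le (abs_nonneg φ) with h | h
    · rw [← h]; simpa using by positivity
    · nlinarith [mul_pos h (sub_pos.mpr h2)]
  have htend : Tendsto φn atTop (𝓝 φ) := by
    have h0 : ∀ n : ℕ, φn n = φ - φ * (1/(n+1)) := by
      intro n; rw [hφn]; dsimp only; field_simp; ring
    have h1 := tendsto_one_div_add_atTop_nhds_zero_nat.const_mul φ
    have h2 := (tendsto_const_nhds (x := φ) (f := atTop (α := ℕ))).sub h1
    rw [mul_zero, sub_zero] at h2
    exact h2.congr (fun n => (h0 n).symm)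
  have hcont : ∀ r : ℝ, Continuous (fun t : ℝ =>
      (Complex.exp (-(↑r * Complex.exp (Complex.I * t))) - 1) * (r:ℂ) ^ (-(1+(α:ℂ)))) := by
    intro r
    apply Continuous.mul ?_ continuous_const
    apply Continuous.sub ?_ continuous_const
    apply Complex.continuous_exp.comp
    apply Continuous.neg
    apply continuous_const.mul
    exact Complex.continuous_exp.comp (continuous_const.mul Complex.continuous_ofReal)
  have hLHS : Tendsto (fun n => rayH α (Complex.exp (Complex.I * (φn n))))
      atTop (𝓝 (rayH α (Complex.exp (Complex.I * φ)))) := by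
    apply tendsto_integral_filter_of_dominated_convergence
      (bound := fun r => 2 * (min r 1 * r ^ (-(1+α))))
    · exact Eventually.of_forall fun n =>
        (integrand_contOn α _).aestronglyMeasurable measurableSet_Ioi
    · apply Eventually.of_forall
      intro n
      filter_upwards [ae_restrict_mem measurableSet_Ioi] with r hr
      have hcre : 0 ≤ (Complex.exp (Complex.I * (φn n : ℝ))).re := by
        rw [exp_I_re]
        apply Real.cos_nonneg_of_mem_Icc
        have := abs_le.mp (le_of_lt (hlt n))
        exact ⟨this.1, this.2⟩
      have := integrand_norm_le (α := α) hcre hr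
      rwa [norm_exp_I, max_self, mul_one] at this
    · exact (integrable_dom hα hα1).const_mul 2
    · filter_upwards [ae_restrict_mem measurableSet_Ioi] with r hr
      exact ((hcont r).tendsto φ).comp htend
  have hRHS : Tendsto (fun n => Complex.exp ((α:ℂ) * (Complex.I * (φn n : ℝ)))
      * Complex.Gamma (-(α:ℂ))) atTop
      (𝓝 (Complex.exp ((α:ℂ) * (Complex.I * φ)) * Complex.Gamma (-(α:ℂ)))) := by
    have hc : Continuous (fun t : ℝ =>
        Complex.exp ((α:ℂ) * (Complex.I * t)) * Complex.Gamma (-(α:ℂ))) := by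
      apply Continuous.mul ?_ continuous_const
      exact Complex.continuous_exp.comp
        (continuous_const.mul (continuous_const.mul Complex.continuous_ofReal))
    exact (hc.tendsto φ).comp htend
  have heach : ∀ n, rayH α (Complex.exp (Complex.I * (φn n : ℝ)))
      = Complex.exp ((α:ℂ) * (Complex.I * (φn n : ℝ))) * Complex.Gamma (-(α:ℂ)) :=
    fun n => rayH_ray_interior hα hα1 (hlt n)
  exact tendsto_nhds_unique (hLHS.congr fun n => heach n) hRHS


end RayAux


open RayAux in
theorem ray_integral_Gamma_neg (α φ₀ : ℝ) (hα : 0 < α) (hα1 : α < 1)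
    (hφ₀ : -(π / 2) ≤ φ₀) (hφ₀' : φ₀ ≤ π / 2) :
    ∫ r in Set.Ioi (0 : ℝ),
      (Complex.exp (-((r : ℂ) * Complex.exp (Complex.I * (φ₀ : ℂ)))) - 1) *
        ((r : ℂ) * Complex.exp (Complex.I * (φ₀ : ℂ))) ^ (-(1 + (α : ℂ))) *
        Complex.exp (Complex.I * (φ₀ : ℂ))
      = Complex.Gamma (-(α : ℂ)) := by
  have hπ : |φ₀| ≤ π/2 := abs_le.mpr ⟨by linarith, hφ₀'⟩
  have hπ2 := Real.pi_pos
  have key := rayH_ray hα hα1 hφ₀ hφ₀'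
  have hstep : (∫ r in Set.Ioi (0 : ℝ),
      (Complex.exp (-((r : ℂ) * Complex.exp (Complex.I * (φ₀ : ℂ)))) - 1) *
        ((r : ℂ) * Complex.exp (Complex.I * (φ₀ : ℂ))) ^ (-(1 + (α : ℂ))) *
        Complex.exp (Complex.I * (φ₀ : ℂ)))
      = rayH α (Complex.exp (Complex.I * (φ₀ : ℂ)))
        * (Complex.exp (-(1+(α:ℂ)) * (Complex.I * φ₀)) * Complex.exp (Complex.I * φ₀)) := by
    rw [rayH, ← integral_mul_const]
    apply setIntegral_congr_fun measurableSet_Ioi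
    intro r hr
    dsimp only
    have him1 : -π < ((Real.log r : ℂ) + Complex.I * (φ₀:ℂ)).im := by
      simp only [Complex.add_im, Complex.ofReal_im, Complex.mul_im, Complex.I_re,
        Complex.I_im, Complex.ofReal_re, zero_mul, one_mul, zero_add]
      linarith [abs_le.mp hπ]
    have him2 : ((Real.log r : ℂ) + Complex.I * (φ₀:ℂ)).im ≤ π := by
      simp only [Complex.add_im, Complex.ofReal_im, Complex.mul_im, Complex.I_re,
        Complex.I_im, Complex.ofReal_re, zero_mul, one_mul, zero_add]
      linarith [abs_le.mp hπ]
    have hrc : (r:ℂ) * Complex.exp (Complex.I * (φ₀:ℂ))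
        = Complex.exp ((Real.log r : ℂ) + Complex.I * (φ₀:ℂ)) := by
      rw [Complex.exp_add, ← Complex.ofReal_exp, Real.exp_log hr]
    have hcpow : ((r:ℂ) * Complex.exp (Complex.I * (φ₀:ℂ))) ^ (-(1+(α:ℂ)))
        = (r:ℂ) ^ (-(1+(α:ℂ))) * Complex.exp (-(1+(α:ℂ)) * (Complex.I * (φ₀:ℂ))) := by
      rw [hrc, Complex.cpow_def_of_ne_zero (Complex.exp_ne_zero _),
        Complex.log_exp him1 him2, add_mul, Complex.exp_add]
      congr 1
      · rw [Complex.cpow_def_of_ne_zero (Complex.ofReal_ne_zero.mpr hr.ne'),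
          ← Complex.ofReal_log hr.le]
      · congr 1
        ring
    rw [hcpow]
    ring
  have hone : Complex.exp ((α:ℂ) * (Complex.I * (φ₀:ℂ)))
      * Complex.exp (-(1+(α:ℂ)) * (Complex.I * (φ₀:ℂ)))
      * Complex.exp (Complex.I * (φ₀:ℂ)) = 1 := by
    rw [← Complex.exp_add, ← Complex.exp_add,
      show (α:ℂ) * (Complex.I * (φ₀:ℂ)) + -(1+(α:ℂ)) * (Complex.I * (φ₀:ℂ))
        + Complex.I * (φ₀:ℂ) = 0 by ring]
    exact Complex.exp_zero
  rw [hstep, key]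
  linear_combination Complex.Gamma (-(α:ℂ)) * hone
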